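/- arXiv:1912.08872 — 2 statements merged into one kernel-verified Lean document; each statement's English description precedes it below -/
import Mathlib

section
/- Let G be a finite group acting on a countably infinite universal G-set U, and let C and D be M(U)-categories, each carrying the G-action through the functors (l^g)_*. Then the functor F^G(C ⊠ D) → F^G(C) × F^G(D), induced on G-fixed categories by the two projections of the box product, is an equivalence of categories: it is fully faithful, and every pair of G-fixed objects (c, d) is isomorphic in the G-fixed category of C × D to a disjointly supported G-fixed pair. (This is the G-fixed-point form of the theorem that the inclusion C ⊠ D → C × D is a global equivalence.) -/
open CategoryTheory

/-- The monoid of injective self-maps of `U`, under composition. -/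
def Minj (U : Type*) : Submonoid (Function.End U) where
  carrier := {f | Function.Injective f}
  mul_mem' := fun hf hg => hf.comp hg
  one_mem' := Function.injective_id

instance (U : Type*) : FunLike (Minj U) U U where
  coe u := u.1
  coe_injective := fun _ _ h => Subtype.ext h

@[simp] lemma Minj.mul_apply {U : Type*} (u v : Minj U) (a : U) : (u * v) a = u (v a) := rfl

/-- `x` is supported on `A` if every injection fixing `A` elementwise fixes `x`. -/
def Supported {U : Type*} {X : Type*} [MulAction (Minj U) X] (A : Set U) (x : X) : Prop :=
  ∀ u : Minj U, (∀ a ∈ A, u a = a) → u • x = x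

/-- `x` is finitely supported if it is supported on some finite subset of `U`. -/
def FinSupported {U : Type*} {X : Type*} [MulAction (Minj U) X] (x : X) : Prop :=
  ∃ A : Finset U, Supported (A : Set U) x

/-- The support of `x`: the intersection of all finite subsets of `U` on which `x`
is supported. -/
def supp {U : Type*} {X : Type*} [MulAction (Minj U) X] (x : X) : Set U :=
  {i : U | ∀ A : Finset U, Supported (A : Set U) x → i ∈ A}

/-- An `M(U)`-category: a category with an action of the injection monoid on objects,
together with coherent isomorphisms `ι u x : x ≅ u • x`. The action of `u` on morphisms
is then given by conjugation with these isomorphisms. -/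
structure MCat (U : Type*) (C : Type*) [Category C] [MulAction (Minj U) C] where
  ι : ∀ (u : Minj U) (x : C), x ≅ u • x
  ι_mul : ∀ (u v : Minj U) (x : C),
    (ι u x).hom ≫ (ι v (u • x)).hom = (ι (v * u) x).hom ≫ eqToHom (mul_smul v u x)

namespace MCat

variable {U : Type*} {C : Type*} [Category C] [MulAction (Minj U) C]

/-- The action `u_*` of an injection on morphisms: `u_*(f) = ι(u,y) ∘ f ∘ ι(u,x)⁻¹`. -/
def act (h : MCat U C) (u : Minj U) {x y : C} (f : x ⟶ y) : u • x ⟶ u • y :=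
  (h.ι u x).inv ≫ f ≫ (h.ι u y).hom

/-- The natural isomorphism `[v,u]^x := ι(v,x) ∘ ι(u,x)⁻¹ : u • x ⟶ v • x`. -/
def tw (h : MCat U C) (v u : Minj U) (x : C) : u • x ⟶ v • x :=
  (h.ι u x).inv ≫ (h.ι v x).hom

@[simp] lemma act_id (h : MCat U C) (u : Minj U) (x : C) : h.act u (𝟙 x) = 𝟙 (u • x) := by
  simp [act]

@[simp] lemma act_comp (h : MCat U C) (u : Minj U) {x y z : C} (f : x ⟶ y) (g : y ⟶ z) :
    h.act u (f ≫ g) = h.act u f ≫ h.act u g := by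
  simp [act]

lemma ι_natural (h : MCat U C) (u : Minj U) {x y : C} (f : x ⟶ y) :
    (h.ι u x).hom ≫ h.act u f = f ≫ (h.ι u y).hom := by
  simp [act]

end MCat

/-- A universal `G`-set: a countable `G`-set in which every subgroup of `G` occurs as the
stabilizer of infinitely many elements. -/
def IsUniversalGSet (G : Type*) [Group G] (U : Type*) [MulAction G U] : Prop :=
  Countable U ∧ ∀ H : Subgroup G, {u : U | MulAction.stabilizer G u = H}.Infinite

/-- For `g : G`, the injection `l^g : U → U`, `i ↦ g • i`, as an element of `M(U)`. -/
def lG {G : Type*} [Group G] {U : Type*} [MulAction G U] (g : G) : Minj U :=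
  ⟨fun i => g • i, MulAction.injective g⟩

section

variable (G : Type*) [Group G] (U : Type*) [MulAction G U]
variable (C : Type*) [Category C] [MulAction (Minj U) C]

/-- Objects of the `G`-fixed category `F^G C`: objects of `C` fixed by all `(l^g)_*`. -/
structure FixedObj (hC : MCat U C) where
  obj : C
  fixed : ∀ g : G, lG (U := U) g • obj = obj

variable {G U C}

/-- The canonical automorphism of a `G`-fixed object given by `ι(l^g, x)` followed by the
identification `l^g • x = x`.  A morphism of `C` between fixed objects is `G`-fixed exactly
when it commutes with these automorphisms. -/
def fixAut (hC : MCat U C) (g : G) (x : C) (hx : lG (U := U) g • x = x) : x ⟶ x :=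
  (hC.ι (lG g) x).hom ≫ eqToHom hx

variable (G U C)

/-- The `G`-fixed category `F^G C`: `G`-fixed objects and `G`-fixed morphisms. -/
instance FixedObj.category (hC : MCat U C) : Category (FixedObj G U C hC) where
  Hom x y := {f : x.obj ⟶ y.obj //
    ∀ g : G, f ≫ fixAut hC g y.obj (y.fixed g) = fixAut hC g x.obj (x.fixed g) ≫ f}
  id x := ⟨𝟙 x.obj, fun g => by simp⟩
  comp {x y z} f g := ⟨f.1 ≫ g.1, fun γ => by
    rw [Category.assoc, g.2 γ, ← Category.assoc, f.2 γ, Category.assoc]⟩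
  id_comp f := Subtype.ext (Category.id_comp f.1)
  comp_id f := Subtype.ext (Category.comp_id f.1)
  assoc f g h := Subtype.ext (Category.assoc f.1 g.1 h.1)

end

/-- A pair of `G`-fixed objects is disjointly supported if the two components admit disjoint
supporting subsets of `U`. -/
def DisjointlySupportedPair {G U C D : Type*} [Group G] [MulAction G U]
    [Category C] [MulAction (Minj U) C] [Category D] [MulAction (Minj U) D]
    (hC : MCat U C) (hD : MCat U D)
    (p : FixedObj G U C hC × FixedObj G U D hD) : Prop :=
  ∃ A B : Set U, Disjoint A B ∧ Supported A p.1.obj ∧ Supported B p.2.obj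



set_option linter.unusedSectionVars false
set_option linter.unusedVariables false

section OrbitLemmas
open MulAction

lemma stab_smul_mem {G U : Type*} [Group G] [MulAction G U] (g h : G) (a : U) :
    h ∈ stabilizer G (g • a) ↔ g⁻¹ * h * g ∈ stabilizer G a := by
  simp only [mem_stabilizer_iff, mul_smul]
  constructor
  · intro H
    rw [H, inv_smul_smul]
  · intro H
    have := congrArg (g • ·) H
    simpa [smul_smul, mul_assoc] using this

variable {G U : Type*} [Group G] [Finite G] [MulAction G U]

/-- The set of `G`-orbits of `U` containing a point with stabilizer exactly `H`. -/
def orbClass (G : Type*) [Group G] (U : Type*) [MulAction G U] (H : Subgroup G) :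
    Set (Quotient (orbitRel G U)) :=
  Quotient.mk (orbitRel G U) '' {u : U | stabilizer G u = H}

lemma orbClass_infinite (hstab : ∀ H : Subgroup G, {u : U | stabilizer G u = H}.Infinite)
    (H : Subgroup G) : (orbClass G U H).Infinite := by
  intro hfin
  apply hstab H
  have hsub : {u : U | stabilizer G u = H} ⊆
      ⋃ ω ∈ orbClass G U H, {x : U | Quotient.mk (orbitRel G U) x = ω} :=
    fun z hz => Set.mem_biUnion ⟨z, hz, rfl⟩ rfl
  refine (Set.Finite.biUnion hfin ?_).subset hsub
  rintro ω ⟨w, -, rfl⟩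
  have : {x : U | Quotient.mk (orbitRel G U) x = Quotient.mk (orbitRel G U) w} ⊆
      Set.range (fun g : G => g • w) := by
    intro x hx
    obtain ⟨g, hg⟩ := mem_orbit_iff.mp (orbitRel_apply.mp (Quotient.exact hx))
    exact ⟨g, hg⟩
  exact (Set.finite_range _).subset this

lemma orbClass_eq_of_inter {H H' : Subgroup G}
    (hne : (orbClass G U H ∩ orbClass G U H').Nonempty) : orbClass G U H = orbClass G U H' := by
  have key : ∀ K K' : Subgroup G, (orbClass G U K ∩ orbClass G U K').Nonempty →
      orbClass G U K ⊆ orbClass G U K' := by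
    rintro K K' ⟨ω0, ⟨x, hx, hπx⟩, ⟨y, hy, hπy⟩⟩
    obtain ⟨g, hg⟩ := mem_orbit_iff.mp (orbitRel_apply.mp (Quotient.exact (hπx.trans hπy.symm)))
    rintro ω ⟨z, hz, rfl⟩
    have hz' : stabilizer G z = K := hz
    have hx' : stabilizer G x = K := hx
    have hy' : stabilizer G y = K' := hy
    refine ⟨g⁻¹ • z, ?_, ?_⟩
    · show stabilizer G (g⁻¹ • z) = K'
      ext h
      rw [stab_smul_mem, hz', ← hx', ← hg, stab_smul_mem, hy']
      rw [show g⁻¹ * (g⁻¹⁻¹ * h * g⁻¹) * g = h by group]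
    · exact Quotient.sound (orbitRel_apply.mpr (mem_orbit z g⁻¹))
  exact (key H H' hne).antisymm (key H' H (by rwa [Set.inter_comm] at hne))

end OrbitLemmas

section Embedding
open MulAction
variable {G U : Type*} [Group G] [Finite G] [MulAction G U]

lemma exists_equivariant_injection
    (hU : Countable U) (hstab : ∀ H : Subgroup G, {u : U | stabilizer G u = H}.Infinite)
    (X : Type*) [Countable X] [MulAction G X] :
    ∃ f : X → U, Function.Injective f ∧ ∀ (g : G) (x : X), f (g • x) = g • f x := by
  classical
  haveI : Countable U := hU
  obtain ⟨u0, -⟩ := (hstab ⊤).nonempty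
  -- the "type" of an orbit of X
  set cX : Quotient (orbitRel G X) → Set (Quotient (orbitRel G U)) :=
    fun ω => orbClass G U (stabilizer G (Quotient.out ω)) with hcX
  -- choose, for each possible value `S` of `cX`, an injection of orbits of `X` of type `S`
  -- into `S`
  have hES : ∀ S : Set (Quotient (orbitRel G U)),
      ∃ e : Quotient (orbitRel G X) → Quotient (orbitRel G U),
        Set.InjOn e {ω | cX ω = S} ∧ ∀ ω, cX ω = S → e ω ∈ S := by
    intro S
    by_cases hne : ∃ ω, cX ω = S
    · obtain ⟨ω1, hω1⟩ := hne
      have hS : S.Infinite := hω1 ▸ orbClass_infinite hstab _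
      obtain ⟨fn, hfn⟩ := exists_injective_nat (Quotient (orbitRel G X))
      refine ⟨fun ω => (Set.Infinite.natEmbedding S hS (fn ω)).1, ?_,
        fun ω _ => (Set.Infinite.natEmbedding S hS (fn ω)).2⟩
      exact Function.Injective.injOn
        (fun a b h => hfn ((Set.Infinite.natEmbedding S hS).injective (Subtype.ext h)))
    · exact ⟨fun _ => Quotient.mk _ u0, fun a ha => (hne ⟨a, ha⟩).elim,
        fun ω hω => (hne ⟨ω, hω⟩).elim⟩
  choose E hE1 hE2 using hES
  -- the global injection on orbits
  set j : Quotient (orbitRel G X) → Quotient (orbitRel G U) := fun ω => E (cX ω) ω with hj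
  have hjmem : ∀ ω, j ω ∈ cX ω := fun ω => hE2 (cX ω) ω rfl
  have hjinj : Function.Injective j := by
    intro a b hab
    have h2 : cX a = cX b := orbClass_eq_of_inter ⟨j a, hjmem a, hab ▸ hjmem b⟩
    have hab0 : E (cX a) a = E (cX b) b := hab
    rw [h2] at hab0
    exact hE1 (cX b) h2 rfl hab0
  -- choose a point in each chosen orbit with matching stabilizer
  have hskel : ∀ ω : Quotient (orbitRel G X), ∃ z : U,
      stabilizer G z = stabilizer G (Quotient.out ω) ∧ Quotient.mk (orbitRel G U) z = j ω := by
    intro ω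
    obtain ⟨z, hz, hπ⟩ := hjmem ω
    exact ⟨z, hz, hπ⟩
  choose s hs1 hs2 using hskel
  -- choose group elements moving orbit representatives to given points
  have hγex : ∀ x : X, ∃ g : G, g • Quotient.out (Quotient.mk (orbitRel G X) x) = x := by
    intro x
    obtain ⟨g, hg⟩ := mem_orbit_iff.mp (orbitRel_apply.mp (@Quotient.mk_out X (orbitRel G X) x))
    exact ⟨g⁻¹, by rw [← hg, inv_smul_smul]⟩
  choose γ hγ using hγex
  refine ⟨fun x => γ x • s (Quotient.mk (orbitRel G X) x), ?_, ?_⟩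
  · -- injectivity
    intro a b hab
    simp only at hab
    have hπab : j (Quotient.mk (orbitRel G X) a) = j (Quotient.mk (orbitRel G X) b) := by
      rw [← hs2, ← hs2]
      exact Quotient.sound (orbitRel_apply.mpr (mem_orbit_iff.mpr
        ⟨(γ a)⁻¹ * γ b, by rw [mul_smul, ← hab, inv_smul_smul]⟩))
    have hωab : Quotient.mk (orbitRel G X) a = Quotient.mk (orbitRel G X) b := hjinj hπab
    rw [hωab] at hab
    have hst : ((γ b)⁻¹ * γ a) • s (Quotient.mk (orbitRel G X) b)
        = s (Quotient.mk (orbitRel G X) b) := by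
      rw [mul_smul, hab, inv_smul_smul]
    have hst' : ((γ b)⁻¹ * γ a) • Quotient.out (Quotient.mk (orbitRel G X) b)
        = Quotient.out (Quotient.mk (orbitRel G X) b) := by
      have : ((γ b)⁻¹ * γ a) ∈ stabilizer G (s (Quotient.mk (orbitRel G X) b)) := hst
      rw [hs1] at this
      exact this
    calc a = γ a • Quotient.out (Quotient.mk (orbitRel G X) a) := (hγ a).symm
      _ = γ a • Quotient.out (Quotient.mk (orbitRel G X) b) := by rw [hωab]
      _ = γ b • (((γ b)⁻¹ * γ a) • Quotient.out (Quotient.mk (orbitRel G X) b)) := by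
          rw [← mul_smul]
          rw [show γ b * ((γ b)⁻¹ * γ a) = γ a by group]
      _ = γ b • Quotient.out (Quotient.mk (orbitRel G X) b) := by rw [hst']
      _ = b := hγ b
  · -- equivariance
    intro g x
    have hωeq : Quotient.mk (orbitRel G X) (g • x) = Quotient.mk (orbitRel G X) x :=
      Quotient.sound (orbitRel_apply.mpr (mem_orbit x g))
    have h1 : γ (g • x) • Quotient.out (Quotient.mk (orbitRel G X) x) = g • x := by
      have := hγ (g • x); rwa [hωeq] at this
    have h2 : ((g * γ x)⁻¹ * γ (g • x)) • Quotient.out (Quotient.mk (orbitRel G X) x)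
        = Quotient.out (Quotient.mk (orbitRel G X) x) := by
      rw [mul_smul, h1, mul_inv_rev, mul_smul, inv_smul_smul]
      exact inv_smul_eq_iff.mpr (hγ x).symm
    have h3 : ((g * γ x)⁻¹ * γ (g • x)) • s (Quotient.mk (orbitRel G X) x)
        = s (Quotient.mk (orbitRel G X) x) := by
      have : ((g * γ x)⁻¹ * γ (g • x)) ∈ stabilizer G (Quotient.out (Quotient.mk (orbitRel G X) x)) := h2
      rw [← hs1] at this
      exact this
    show γ (g • x) • s (Quotient.mk (orbitRel G X) (g • x))
        = g • (γ x • s (Quotient.mk (orbitRel G X) x))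
    rw [hωeq]
    calc γ (g • x) • s (Quotient.mk (orbitRel G X) x)
        = ((g * γ x) * ((g * γ x)⁻¹ * γ (g • x))) • s (Quotient.mk (orbitRel G X) x) := by
          rw [show (g * γ x) * ((g * γ x)⁻¹ * γ (g • x)) = γ (g • x) by group]
      _ = (g * γ x) • (((g * γ x)⁻¹ * γ (g • x)) • s (Quotient.mk (orbitRel G X) x)) := mul_smul ..
      _ = (g * γ x) • s (Quotient.mk (orbitRel G X) x) := by rw [h3]
      _ = g • (γ x • s (Quotient.mk (orbitRel G X) x)) := mul_smul ..
end Embedding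

section CommPair
open MulAction
variable {G U : Type*} [Group G] [Finite G] [MulAction G U]

lemma exists_commuting_pair (hU : IsUniversalGSet G U) :
    ∃ u v : Minj U, (∀ g : G, lG (U := U) g * u = u * lG g) ∧
      (∀ g : G, lG (U := U) g * v = v * lG g) ∧
      ∀ i i' : U, (u : U → U) i ≠ (v : U → U) i' := by
  classical
  haveI : Countable U := hU.1
  letI : SMul G (U ⊕ U) := ⟨fun g x => Sum.map (fun a => g • a) (fun a => g • a) x⟩
  letI : MulAction G (U ⊕ U) :=
    { one_smul := fun x => by
        cases x with
        | inl a => show Sum.inl ((1 : G) • a) = Sum.inl a; rw [one_smul]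
        | inr a => show Sum.inr ((1 : G) • a) = Sum.inr a; rw [one_smul]
      mul_smul := fun g h x => by
        cases x with
        | inl a => show Sum.inl ((g * h) • a) = Sum.inl (g • h • a); rw [mul_smul]
        | inr a => show Sum.inr ((g * h) • a) = Sum.inr (g • h • a); rw [mul_smul] }
  obtain ⟨f, finj, feq⟩ := exists_equivariant_injection hU.1 hU.2 (U ⊕ U)
  refine ⟨⟨fun i => f (Sum.inl i), fun a b h => Sum.inl_injective (finj h)⟩,
    ⟨fun i => f (Sum.inr i), fun a b h => Sum.inr_injective (finj h)⟩, ?_, ?_, ?_⟩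
  · intro g
    apply Subtype.ext
    funext i
    show g • f (Sum.inl i) = f (Sum.inl (g • i))
    exact (feq g (Sum.inl i)).symm
  · intro g
    apply Subtype.ext
    funext i
    show g • f (Sum.inr i) = f (Sum.inr (g • i))
    exact (feq g (Sum.inr i)).symm
  · intro i i' h
    exact Sum.inl_ne_inr (finj h)


end CommPair

section CatPart

variable {U C : Type*} [Category C] [MulAction (Minj U) C]

lemma MCat.eqToHom_ι (h : MCat U C) (u : Minj U) {a b : C} (e : a = b) :
    eqToHom e ≫ (h.ι u b).hom = (h.ι u a).hom ≫ eqToHom (by rw [e]) := by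
  subst e; simp

lemma MCat.ι_hom_eqToHom (h : MCat U C) {w1 w2 : Minj U} (hw : w1 = w2) (x : C) {z : C}
    (e1 : w1 • x = z) (e2 : w2 • x = z) :
    (h.ι w1 x).hom ≫ eqToHom e1 = (h.ι w2 x).hom ≫ eqToHom e2 := by
  subst hw; rfl

variable {G : Type*} [Group G] [MulAction G U]

lemma fix_compat (hC : MCat U C) (u : Minj U) (hu : ∀ g : G, lG (U := U) g * u = u * lG g)
    (x : C) (hx : ∀ g : G, lG (U := U) g • x = x) (g : G)
    (hx' : lG (U := U) g • (u • x) = u • x) :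
    (hC.ι u x).hom ≫ fixAut hC g (u • x) hx' = fixAut hC g x (hx g) ≫ (hC.ι u x).hom := by
  unfold fixAut
  have L : (hC.ι u x).hom ≫ (hC.ι (lG g) (u • x)).hom ≫ eqToHom hx'
      = (hC.ι (lG (U := U) g * u) x).hom ≫ eqToHom (by rw [mul_smul]; exact hx') := by
    rw [← Category.assoc, hC.ι_mul u (lG g) x, Category.assoc, eqToHom_trans]
  have R : ((hC.ι (lG g) x).hom ≫ eqToHom (hx g)) ≫ (hC.ι u x).hom
      = (hC.ι (u * lG (U := U) g) x).hom ≫ eqToHom (by rw [mul_smul, hx g]) := by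
    rw [Category.assoc, MCat.eqToHom_ι hC u (hx g), ← Category.assoc,
      hC.ι_mul (lG g) u x, Category.assoc, eqToHom_trans]
  rw [L, R]
  exact MCat.ι_hom_eqToHom hC (hu g) x _ _

lemma shift_obj (hC : MCat U C) (u : Minj U) (hu : ∀ g : G, lG (U := U) g * u = u * lG g)
    (x : FixedObj G U C hC) :
    ∃ x' : FixedObj G U C hC, Supported (Set.range (u : U → U)) x'.obj ∧ Nonempty (x' ≅ x) := by
  have hfix : ∀ g : G, lG (U := U) g • (u • x.obj) = u • x.obj := by
    intro g
    rw [← mul_smul, hu g, mul_smul, x.fixed g]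
  refine ⟨⟨u • x.obj, hfix⟩, ?_, ?_⟩
  · intro w hw
    have hwu : w * u = u := by
      apply Subtype.ext
      funext i
      exact hw ((u : U → U) i) ⟨i, rfl⟩
    show w • u • x.obj = u • x.obj
    rw [← mul_smul, hwu]
  · have cond : ∀ g : G, (hC.ι u x.obj).hom ≫ fixAut hC g (u • x.obj) (hfix g)
        = fixAut hC g x.obj (x.fixed g) ≫ (hC.ι u x.obj).hom :=
      fun g => fix_compat hC u hu x.obj x.fixed g (hfix g)
    have cond' : ∀ g : G, (hC.ι u x.obj).inv ≫ fixAut hC g x.obj (x.fixed g)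
        = fixAut hC g (u • x.obj) (hfix g) ≫ (hC.ι u x.obj).inv := by
      intro g
      rw [Iso.inv_comp_eq, ← Category.assoc, cond g, Category.assoc, Iso.hom_inv_id,
        Category.comp_id]
    exact ⟨{ hom := ⟨(hC.ι u x.obj).inv, fun g => cond' g⟩
             inv := ⟨(hC.ι u x.obj).hom, fun g => cond g⟩
             hom_inv_id := Subtype.ext (hC.ι u x.obj).inv_hom_id
             inv_hom_id := Subtype.ext (hC.ι u x.obj).hom_inv_id }⟩

end CatPart


/-- The functor `F^G(C ⊠ D) → F^G(C) × F^G(D)` induced by the projections of the box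
product — here identified with the inclusion of the full subcategory of `F^G C × F^G D`
spanned by the disjointly supported pairs — is an equivalence of categories. -/
theorem stmt0 (G : Type*) [Group G] [Finite G] (U : Type*) [MulAction G U]
    (hU : IsUniversalGSet G U)
    (C D : Type*) [Category C] [MulAction (Minj U) C] [Category D] [MulAction (Minj U) D]
    (hC : MCat U C) (hD : MCat U D) :
    (ObjectProperty.ι (DisjointlySupportedPair (G := G) hC hD)).IsEquivalence := by
  obtain ⟨u, v, hu, hv, huv⟩ := exists_commuting_pair (G := G) hU
  refine { essSurj := ⟨fun p => ?_⟩ }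
  obtain ⟨x', hsx, ⟨ex⟩⟩ := shift_obj hC u hu p.1
  obtain ⟨y', hsy, ⟨ey⟩⟩ := shift_obj hD v hv p.2
  refine ⟨⟨(x', y'), ⟨Set.range (u : U → U), Set.range (v : U → U), ?_, hsx, hsy⟩⟩,
    ⟨{ hom := (ex.hom, ey.hom)
       inv := (ex.inv, ey.inv)
       hom_inv_id := ?_
       inv_hom_id := ?_ }⟩⟩
  · rw [Set.disjoint_left]
    rintro a ⟨i, rfl⟩ ⟨i', hi'⟩
    exact huv i i' hi'.symm
  · exact Prod.ext (by simp) (by simp)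
  · exact Prod.ext (by simp) (by simp)
end

section
/- Let G be a finite group acting on a countably infinite universal G-set U, let S be a finite G-set, and let C be a tame M(U)-category. Let C^{⊠S} denote the full subcategory of the product category C^S spanned by the S-tuples of objects (a_s) whose supports supp(a_s) ⊆ U are pairwise disjoint. Let G act on C^S by sending (a_s)_{s∈S} to ((l^g) • a_{g⁻¹·s})_{s∈S} (and correspondingly on tuples of morphisms via the functors (l^g)_*); this action preserves the subcategory C^{⊠S}. Then the inclusion C^{⊠S} → C^S restricts to an equivalence of categories (C^{⊠S})^G → (C^S)^G between the G-fixed categories. (This is the fixed-point form of the theorem that the Γ-ℳ-category γ(C) associated with a parsummable category is globally special; only the underlying tame ℳ-category is needed.) -/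
open CategoryTheory

section

variable (G : Type*) [Group G] (S : Type*) [MulAction G S]
variable (U : Type*) [MulAction G U]
variable (C : Type*) [Category C] [MulAction (Minj U) C]

/-- Objects of the `G`-fixed category `(C^S)^G` of the product category `C^S`, where `G` acts
by `(a_s)_s ↦ ((l^g) • a_{g⁻¹·s})_s`. -/
structure FixedTuple (hC : MCat U C) where
  X : S → C
  fixed : ∀ (g : G) (s : S), lG (U := U) g • X (g⁻¹ • s) = X s

variable {G S U C}

/-- The canonical morphism `X (g⁻¹ • s) ⟶ X s` of a `G`-fixed tuple; a tuple of morphisms is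
`G`-fixed exactly when it commutes with these. -/
def trTuple (hC : MCat U C) (x : FixedTuple G S U C hC) (g : G) (s : S) :
    x.X (g⁻¹ • s) ⟶ x.X s :=
  (hC.ι (lG g) (x.X (g⁻¹ • s))).hom ≫ eqToHom (x.fixed g s)

variable (G S U C)

/-- The `G`-fixed category `(C^S)^G`. -/
instance FixedTuple.category (hC : MCat U C) : Category (FixedTuple G S U C hC) where
  Hom x y := {f : ∀ s : S, x.X s ⟶ y.X s //
    ∀ (g : G) (s : S), f (g⁻¹ • s) ≫ trTuple hC y g s = trTuple hC x g s ≫ f s}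
  id x := ⟨fun s => 𝟙 (x.X s), fun g s => by simp⟩
  comp {x y z} f g := ⟨fun s => f.1 s ≫ g.1 s, fun γ s => by
    rw [Category.assoc, g.2 γ s, ← Category.assoc, f.2 γ s, Category.assoc]⟩
  id_comp f := Subtype.ext (funext fun s => Category.id_comp (f.1 s))
  comp_id f := Subtype.ext (funext fun s => Category.comp_id (f.1 s))
  assoc f g h := Subtype.ext (funext fun s => Category.assoc (f.1 s) (g.1 s) (h.1 s))

end

/-- The predicate singling out `(C^{⊠S})^G` inside `(C^S)^G`: the supports of the components
are pairwise disjoint. -/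
def PairwiseDisjTuple {G S U C : Type*} [Group G] [MulAction G S] [MulAction G U]
    [Category C] [MulAction (Minj U) C] (hC : MCat U C)
    (x : FixedTuple G S U C hC) : Prop :=
  ∀ s t : S, s ≠ t → Disjoint (supp (U := U) (x.X s)) (supp (U := U) (x.X t))

section SupportLemmas

variable {U : Type*} {X : Type*} [MulAction (Minj U) X]

lemma Supported.mono' {A B : Set U} (h : A ⊆ B) {x : X} (hA : Supported A x) :
    Supported B x := fun u hu => hA u fun a ha => hu a (h ha)

lemma smul_eq_of_agree [Countable U] [Infinite U]
    (A : Finset U) (x : X) (hA : Supported (↑A : Set U) x) (u v : Minj U)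
    (huv : ∀ a ∈ A, u a = v a) (hv : FinSupported (U := U) (v • x)) : u • x = v • x := by
  classical
  obtain ⟨B₀, hB₀⟩ := hv
  set B : Set U := ↑B₀ ∪ (fun a => u a) '' ↑A with hBdef
  have hB : Supported B (v • x) := hB₀.mono' Set.subset_union_left
  have hBfin : B.Finite := B₀.finite_toSet.union (A.finite_toSet.image _)
  set bad : Set U := ↑A ∪ B ∪ (fun i => u i) ⁻¹' B ∪ (fun i => v i) ⁻¹' B with hbaddef
  have hbadfin : bad.Finite := by
    refine ((A.finite_toSet.union hBfin).union ?_).union ?_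
    · exact hBfin.preimage (Set.injOn_of_injective u.2)
    · exact hBfin.preimage (Set.injOn_of_injective v.2)
  have hcompl : (badᶜ).Infinite := hbadfin.infinite_compl
  obtain ⟨c, hc⟩ := Countable.exists_injective_nat U
  let e0 := Set.Infinite.natEmbedding _ hcompl
  let e : ℕ → U := fun n => (e0 n : U)
  have he_inj : Function.Injective e := fun a b h => e0.injective (Subtype.ext h)
  have he_bad : ∀ n, e n ∉ bad := fun n => (e0 n).2
  -- the injection w
  let w : U → U := fun i => if i ∈ A then i else e (2 * c i)
  have hwA : ∀ a ∈ A, w a = a := fun a ha => if_pos ha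
  have hwA' : ∀ i, i ∉ A → w i = e (2 * c i) := fun i hi => if_neg hi
  have hA_bad : (↑A : Set U) ⊆ bad := fun i hi =>
    Or.inl (Or.inl (Or.inl hi))
  have hw_inj : Function.Injective w := by
    intro i j hij
    by_cases hi : i ∈ A <;> by_cases hj : j ∈ A
    · rw [hwA i hi, hwA j hj] at hij; exact hij
    · rw [hwA i hi, hwA' j hj] at hij
      exact absurd (hij ▸ hA_bad hi) (he_bad _)
    · rw [hwA' i hi, hwA j hj] at hij
      exact absurd (hij ▸ hA_bad hj) (he_bad _)
    · rw [hwA' i hi, hwA' j hj] at hij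
      have := he_inj hij
      exact hc (by omega)
  let wM : Minj U := ⟨w, hw_inj⟩
  have hwx : wM • x = x := hA wM hwA
  have hwnb : ∀ i, i ∉ A → w i ∉ bad := fun i hi => hwA' i hi ▸ he_bad _
  have hwuB : ∀ i, i ∉ A → u (w i) ∉ B := fun i hi h =>
    (hwnb i hi) (Or.inl (Or.inr h))
  have hwvB : ∀ i, i ∉ A → v (w i) ∉ B := fun i hi h =>
    (hwnb i hi) (Or.inr h)
  -- the injection t
  let P : U → Prop := fun j => ∃ i, i ∉ A ∧ v (w i) = j
  let t : U → U := fun j =>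
    if hj : P j then u (w (Classical.choose hj)) else if j ∈ B then j else u (e (2 * c j + 1))
  have ht_B : ∀ j ∈ B, t j = j := by
    intro j hj
    have hnP : ¬ P j := by
      rintro ⟨i, hi, rfl⟩
      exact hwvB i hi hj
    simp only [t, dif_neg hnP, if_pos hj]
  have ht_v : ∀ i, t (v (w i)) = u (w i) := by
    intro i
    by_cases hi : i ∈ A
    · have h1 : v (w i) = u i := by rw [hwA i hi, ← huv i hi]
      have h2 : u i ∈ B := Or.inr ⟨i, hi, rfl⟩
      rw [h1, ht_B _ h2, hwA i hi]
    · have hP : P (v (w i)) := ⟨i, hi, rfl⟩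
      simp only [t, dif_pos hP]
      obtain ⟨hi0, heq⟩ := Classical.choose_spec hP
      exact congrArg (⇑u) (v.2 heq)
  have ht_inj : Function.Injective t := by
    intro j₁ j₂ h
    by_cases h1 : P j₁ <;> by_cases h2 : P j₂
    · simp only [t, dif_pos h1, dif_pos h2] at h
      obtain ⟨hi1, he1⟩ := Classical.choose_spec h1
      obtain ⟨hi2, he2⟩ := Classical.choose_spec h2
      rw [← he1, ← he2]
      exact congrArg (fun z => v (w z)) (hw_inj (u.2 h))
    · simp only [t, dif_pos h1, dif_neg h2] at h
      obtain ⟨hi1, he1⟩ := Classical.choose_spec h1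
      by_cases hb : j₂ ∈ B
      · rw [if_pos hb] at h
        exact absurd (h ▸ hb) (hwuB _ hi1)
      · rw [if_neg hb] at h
        have := he_inj (u.2 (by have h' := h; simp only [hwA' _ hi1] at h'; exact h'))
        omega
    · simp only [t, dif_pos h2, dif_neg h1] at h
      obtain ⟨hi2, he2⟩ := Classical.choose_spec h2
      by_cases hb : j₁ ∈ B
      · rw [if_pos hb] at h
        exact absurd (h ▸ hb) ((hwuB _ hi2))
      · rw [if_neg hb] at h
        have := he_inj (u.2 (by have h' := h.symm; simp only [hwA' _ hi2] at h'; exact h'))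
        omega
    · simp only [t, dif_neg h1, dif_neg h2] at h
      by_cases hb1 : j₁ ∈ B <;> by_cases hb2 : j₂ ∈ B
      · rwa [if_pos hb1, if_pos hb2] at h
      · rw [if_pos hb1, if_neg hb2] at h
        exact absurd (h ▸ hb1) (fun hB' => he_bad _ (Or.inl (Or.inr hB')))
      · rw [if_neg hb1, if_pos hb2] at h
        exact absurd (h.symm ▸ hb2) (fun hB' => he_bad _ (Or.inl (Or.inr hB')))
      · rw [if_neg hb1, if_neg hb2] at h
        have := he_inj (u.2 h)
        exact hc (by omega)
  let tM : Minj U := ⟨t, ht_inj⟩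
  have htx : tM • (v • x) = v • x := hB tM ht_B
  have hkey : u * wM = tM * (v * wM) := by
    apply Subtype.ext
    funext i
    exact (ht_v i).symm
  calc u • x = u • (wM • x) := by rw [hwx]
    _ = (u * wM) • x := (mul_smul _ _ _).symm
    _ = (tM * (v * wM)) • x := by rw [hkey]
    _ = tM • ((v * wM) • x) := mul_smul _ _ _
    _ = tM • (v • (wM • x)) := by rw [mul_smul]
    _ = tM • (v • x) := by rw [hwx]
    _ = v • x := htx

lemma supported_smul_image [Countable U] [Infinite U] [DecidableEq U]
    (htame : ∀ y : X, FinSupported (U := U) y) (A : Finset U) (x : X)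
    (hA : Supported (↑A : Set U) x) (u : Minj U) :
    Supported (↑(A.image u) : Set U) (u • x) := by
  intro q hq
  rw [← mul_smul]
  refine smul_eq_of_agree A x hA (q * u) u (fun a ha => ?_) (htame _)
  show q (u a) = u a
  exact hq (u a) (by exact_mod_cast Finset.mem_image_of_mem u ha)

lemma supp_subset_of_supported {A : Finset U} {x : X} (hA : Supported (↑A : Set U) x) :
    supp (U := U) x ⊆ ↑A := fun i hi => hi A hA

end SupportLemmas

section Embedding

/-- Greedy choice of points in prescribed sets, avoiding the "orbits" of all
previously chosen points. -/
noncomputable def freshPick {U : Type*} [DecidableEq U] (T : ℕ → Set U) (orb : U → Set U)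
    (h : ∀ (n : ℕ) (s : Finset U), (T n \ ⋃ z ∈ s, orb z).Nonempty) : ℕ → U
  | n => (h n ((Finset.range n).attach.image fun m => freshPick T orb h m.1)).some
termination_by n => n
decreasing_by all_goals exact Finset.mem_range.mp m.2

lemma freshPick_spec {U : Type*} [DecidableEq U] (T : ℕ → Set U) (orb : U → Set U)
    (h : ∀ (n : ℕ) (s : Finset U), (T n \ ⋃ z ∈ s, orb z).Nonempty) (n : ℕ) :
    freshPick T orb h n ∈ T n ∧ ∀ m, m < n → freshPick T orb h n ∉ orb (freshPick T orb h m) := by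
  rw [freshPick]
  have hmem := (h n ((Finset.range n).attach.image fun m => freshPick T orb h m.1)).some_mem
  obtain ⟨h1, h2⟩ := hmem
  refine ⟨h1, fun m hm hmem' => h2 ?_⟩
  simp only [Set.mem_iUnion]
  exact ⟨freshPick T orb h m,
    Finset.mem_image.mpr ⟨⟨m, Finset.mem_range.mpr hm⟩, Finset.mem_attach _ _, rfl⟩, hmem'⟩

lemma smul_eq_smul_of_mem_stab {G V : Type*} [Group G] [MulAction G V] {a b : G} {z : V}
    (h : a⁻¹ * b ∈ MulAction.stabilizer G z) : a • z = b • z := by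
  have h' : (a⁻¹ * b) • z = z := h
  calc a • z = a • ((a⁻¹ * b) • z) := by rw [h']
    _ = (a * (a⁻¹ * b)) • z := (mul_smul _ _ _).symm
    _ = b • z := by rw [mul_inv_cancel_left]

lemma mem_stab_of_smul_eq_smul {G V : Type*} [Group G] [MulAction G V] {a b : G} {z : V}
    (h : a • z = b • z) : a⁻¹ * b ∈ MulAction.stabilizer G z := by
  show (a⁻¹ * b) • z = z
  rw [mul_smul, ← h, inv_smul_smul]

lemma exists_equivariant_embedding {G : Type*} [Group G] [Finite G]
    {U : Type*} [MulAction G U] (hU : IsUniversalGSet G U)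
    (V : Type*) [Countable V] [MulAction G V] :
    ∃ φ : V → U, Function.Injective φ ∧ ∀ (g : G) (v : V), φ (g • v) = g • φ v := by
  classical
  cases isEmpty_or_nonempty V with
  | inl h => exact ⟨isEmptyElim, fun {a b} _ => isEmptyElim a, fun g v => isEmptyElim v⟩
  | inr hne =>
  obtain ⟨k, hk⟩ := Countable.exists_injective_nat (Quotient (MulAction.orbitRel G V))
  let q : V → Quotient (MulAction.orbitRel G V) := Quotient.mk (MulAction.orbitRel G V)
  let rep : Quotient (MulAction.orbitRel G V) → V := Quotient.out
  let Hn : ℕ → Subgroup G := fun n =>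
    if h : ∃ ω, k ω = n then MulAction.stabilizer G (rep h.choose) else ⊤
  have horb : ∀ z : U, (MulAction.orbit G z).Finite := fun z => Set.finite_range _
  have hfresh : ∀ (n : ℕ) (s : Finset U),
      ({ u : U | MulAction.stabilizer G u = Hn n } \ ⋃ z ∈ s, MulAction.orbit G z).Nonempty :=
    fun n s => ((hU.2 (Hn n)).diff (s.finite_toSet.biUnion fun z _ => horb z)).nonempty
  let P : ℕ → U := freshPick _ _ hfresh
  have hP1 : ∀ n, MulAction.stabilizer G (P n) = Hn n :=
    fun n => (freshPick_spec _ _ hfresh n).1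
  have hP2 : ∀ m n, m < n → P n ∉ MulAction.orbit G (P m) :=
    fun m n hmn => (freshPick_spec _ _ hfresh n).2 m hmn
  have hPdisj : ∀ m n, m ≠ n → ∀ z : U,
      z ∈ MulAction.orbit G (P m) → z ∈ MulAction.orbit G (P n) → False := by
    have key : ∀ m n, m < n → ∀ z : U,
        z ∈ MulAction.orbit G (P m) → z ∈ MulAction.orbit G (P n) → False := by
      rintro m n hmn z ⟨a, ha⟩ ⟨b, hb⟩
      have ha' : a • P m = z := ha
      have hb' : b • P n = z := hb
      refine hP2 m n hmn ⟨b⁻¹ * a, ?_⟩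
      show (b⁻¹ * a) • P m = P n
      rw [mul_smul, ha', ← hb', inv_smul_smul]
    intro m n hmn z h1 h2
    rcases hmn.lt_or_gt with h | h
    · exact key m n h z h1 h2
    · exact key n m h z h2 h1
  have hPstab : ∀ ω, MulAction.stabilizer G (P (k ω)) = MulAction.stabilizer G (rep ω) := by
    intro ω
    rw [hP1 (k ω)]
    have hex : ∃ ω', k ω' = k ω := ⟨ω, rfl⟩
    have heq : hex.choose = ω := hk hex.choose_spec
    simp only [Hn, dif_pos hex, heq]
  have hrep : ∀ v : V, ∃ g : G, g • rep (q v) = v := by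
    intro v
    have h1 : rep (q v) ∈ MulAction.orbit G v := by
      rw [← MulAction.orbitRel_apply (G := G)]
      exact Quotient.exact (Quotient.out_eq (q v))
    obtain ⟨g, hg⟩ := h1
    have hg' : g • v = rep (q v) := hg
    exact ⟨g⁻¹, by rw [← hg', inv_smul_smul]⟩
  let gg : V → G := fun v => (hrep v).choose
  have hgg : ∀ v : V, gg v • rep (q v) = v := fun v => (hrep v).choose_spec
  have hqs : ∀ (g : G) (v : V), q (g • v) = q v := by
    intro g v
    exact Quotient.sound (MulAction.orbitRel_apply.mpr ⟨g, rfl⟩)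
  refine ⟨fun v => gg v • P (k (q v)), ?_, ?_⟩
  · -- injectivity
    intro v v' hvv'
    have h0 : gg v • P (k (q v)) = gg v' • P (k (q v')) := hvv'
    have hq : q v = q v' := by
      by_contra hne'
      refine hPdisj (k (q v)) (k (q v')) (fun e => hne' (hk e)) (gg v • P (k (q v)))
        ⟨gg v, rfl⟩ ?_
      rw [h0]
      exact ⟨gg v', rfl⟩
    rw [hq] at h0
    have hstab : (gg v)⁻¹ * gg v' ∈ MulAction.stabilizer G (rep (q v')) := by
      rw [← hPstab (q v')]
      exact mem_stab_of_smul_eq_smul h0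
    have hrr := smul_eq_smul_of_mem_stab hstab
    calc v = gg v • rep (q v) := (hgg v).symm
      _ = gg v • rep (q v') := by rw [hq]
      _ = gg v' • rep (q v') := hrr
      _ = v' := hgg v'
  · -- equivariance
    intro g v
    show gg (g • v) • P (k (q (g • v))) = g • (gg v • P (k (q v)))
    have hstab : (gg (g • v))⁻¹ * (g * gg v) ∈ MulAction.stabilizer G (P (k (q v))) := by
      rw [hPstab (q v)]
      apply mem_stab_of_smul_eq_smul
      have h1 : gg (g • v) • rep (q v) = g • v := by
        have h2 := hgg (g • v); rwa [hqs g v] at h2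
      rw [h1, mul_smul, hgg v]
    have hrr := smul_eq_smul_of_mem_stab hstab
    rw [hqs g v, hrr, mul_smul]

end Embedding

section MCatLemmas

variable {U : Type*} {C : Type*} [Category C] [MulAction (Minj U) C]

lemma MCat.ι_eqToHom (hC : MCat U C) (u : Minj U) {a b : C} (h : a = b) :
    eqToHom h ≫ (hC.ι u b).hom = (hC.ι u a).hom ≫ eqToHom (by rw [h]) := by
  subst h; simp

lemma MCat.comp_eq (hC : MCat U C) {p q : Minj U} (hpq : p = q) (a : C) {b : C}
    (h1 : p • a = b) (h2 : q • a = b) :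
    (hC.ι p a).hom ≫ eqToHom h1 = (hC.ι q a).hom ≫ eqToHom h2 := by
  subst hpq; rfl

end MCatLemmas

/-- For a finite group `G`, a finite `G`-set `S`, a countably infinite universal `G`-set `U`
and a tame `M(U)`-category `C`, the inclusion `C^{⊠S} → C^S` restricts to an equivalence
`(C^{⊠S})^G → (C^S)^G` of `G`-fixed categories. -/
theorem stmt1 (G : Type*) [Group G] [Finite G] (S : Type*) [Finite S] [MulAction G S]
    (U : Type*) [MulAction G U] (hU : IsUniversalGSet G U)
    (C : Type*) [Category C] [MulAction (Minj U) C]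
    (hC : MCat U C) (htame : ∀ x : C, FinSupported (U := U) x) :
    (ObjectProperty.ι (PairwiseDisjTuple (G := G) (S := S) hC)).IsEquivalence := by
  classical
  have hCountU : Countable U := hU.1
  have hInfU : Infinite U := by
    have h1 : (Set.univ : Set U).Infinite := (hU.2 ⊤).mono (Set.subset_univ _)
    exact Set.infinite_univ_iff.mp h1
  obtain ⟨φ, hφinj, hφeq⟩ := exists_equivariant_embedding hU (U × S)
  let us : S → Minj U := fun s => ⟨fun i => φ (i, s), fun a b h => congrArg Prod.fst (hφinj h)⟩
  have key : ∀ (g : G) (s : S), (lG g * us (g⁻¹ • s) : Minj U) = us s * lG g := by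
    intro g s
    apply Subtype.ext; funext i
    show g • φ (i, g⁻¹ • s) = φ (g • i, s)
    have h := hφeq g (i, g⁻¹ • s)
    rw [Prod.smul_mk, smul_inv_smul] at h
    exact h.symm
  refine { essSurj := ⟨fun x => ?_⟩ }
  let A : S → Finset U := fun s => (htame (x.X s)).choose
  have hA : ∀ s, Supported (↑(A s) : Set U) (x.X s) := fun s => (htame (x.X s)).choose_spec
  have hfix : ∀ (g : G) (s : S),
      lG (U := U) g • (us (g⁻¹ • s) • x.X (g⁻¹ • s)) = us s • x.X s := by
    intro g s
    rw [← mul_smul, key g s, mul_smul, x.fixed g s]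
  let y : FixedTuple G S U C hC := ⟨fun s => us s • x.X s, hfix⟩
  have hy : PairwiseDisjTuple hC y := by
    intro s t hst
    rw [Set.disjoint_left]
    intro i his hit
    have h1 : i ∈ (↑((A s).image (us s)) : Set U) :=
      supp_subset_of_supported (supported_smul_image htame _ _ (hA s) (us s)) his
    have h2 : i ∈ (↑((A t).image (us t)) : Set U) :=
      supp_subset_of_supported (supported_smul_image htame _ _ (hA t) (us t)) hit
    simp only [Finset.coe_image, Set.mem_image, Finset.mem_coe] at h1 h2
    obtain ⟨a, _, ha⟩ := h1
    obtain ⟨b, _, hb⟩ := h2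
    exact hst (congrArg Prod.snd (hφinj ((ha.trans hb.symm : φ (a, s) = φ (b, t)))))
  have cnd_fwd : ∀ (g : G) (s : S),
      (hC.ι (us (g⁻¹ • s)) (x.X (g⁻¹ • s))).hom ≫ trTuple hC y g s =
        trTuple hC x g s ≫ (hC.ι (us s) (x.X s)).hom := by
    intro g s
    show (hC.ι (us (g⁻¹ • s)) (x.X (g⁻¹ • s))).hom ≫
        (hC.ι (lG g) (y.X (g⁻¹ • s))).hom ≫ eqToHom (y.fixed g s) =
      ((hC.ι (lG g) (x.X (g⁻¹ • s))).hom ≫ eqToHom (x.fixed g s)) ≫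
        (hC.ι (us s) (x.X s)).hom
    calc (hC.ι (us (g⁻¹ • s)) (x.X (g⁻¹ • s))).hom ≫
        (hC.ι (lG g) (y.X (g⁻¹ • s))).hom ≫ eqToHom (y.fixed g s)
        = ((hC.ι (us (g⁻¹ • s)) (x.X (g⁻¹ • s))).hom ≫
            (hC.ι (lG g) (us (g⁻¹ • s) • x.X (g⁻¹ • s))).hom) ≫ eqToHom (y.fixed g s) := by
          rw [Category.assoc]
      _ = ((hC.ι (lG g * us (g⁻¹ • s)) (x.X (g⁻¹ • s))).hom ≫
            eqToHom (mul_smul (lG g) (us (g⁻¹ • s)) (x.X (g⁻¹ • s)))) ≫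
            eqToHom (y.fixed g s) := by
          rw [hC.ι_mul]
      _ = (hC.ι (lG g * us (g⁻¹ • s)) (x.X (g⁻¹ • s))).hom ≫
            eqToHom ((mul_smul (lG g) (us (g⁻¹ • s)) (x.X (g⁻¹ • s))).trans (y.fixed g s)) := by
          rw [Category.assoc, eqToHom_trans]
      _ = (hC.ι (us s * lG g) (x.X (g⁻¹ • s))).hom ≫
            eqToHom ((mul_smul (us s) (lG g) (x.X (g⁻¹ • s))).trans
              (by rw [x.fixed g s])) :=
          hC.comp_eq (key g s) _ _ _
      _ = ((hC.ι (us s * lG g) (x.X (g⁻¹ • s))).hom ≫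
            eqToHom (mul_smul (us s) (lG g) (x.X (g⁻¹ • s)))) ≫
            eqToHom (show us s • (lG g • x.X (g⁻¹ • s)) = us s • x.X s by
              rw [x.fixed g s]) := by
          rw [Category.assoc, eqToHom_trans]
      _ = ((hC.ι (lG g) (x.X (g⁻¹ • s))).hom ≫
            (hC.ι (us s) (lG g • x.X (g⁻¹ • s))).hom) ≫
            eqToHom (show us s • (lG g • x.X (g⁻¹ • s)) = us s • x.X s by
              rw [x.fixed g s]) := by
          rw [hC.ι_mul]
      _ = (hC.ι (lG g) (x.X (g⁻¹ • s))).hom ≫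
            ((hC.ι (us s) (lG g • x.X (g⁻¹ • s))).hom ≫
              eqToHom (show us s • (lG g • x.X (g⁻¹ • s)) = us s • x.X s by
                rw [x.fixed g s])) := by
          rw [Category.assoc]
      _ = (hC.ι (lG g) (x.X (g⁻¹ • s))).hom ≫
            (eqToHom (x.fixed g s) ≫ (hC.ι (us s) (x.X s)).hom) := by
          rw [hC.ι_eqToHom (us s) (x.fixed g s)]
      _ = ((hC.ι (lG g) (x.X (g⁻¹ • s))).hom ≫ eqToHom (x.fixed g s)) ≫
            (hC.ι (us s) (x.X s)).hom := by
          rw [Category.assoc]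
  have cnd_bwd : ∀ (g : G) (s : S),
      (hC.ι (us (g⁻¹ • s)) (x.X (g⁻¹ • s))).inv ≫ trTuple hC x g s =
        trTuple hC y g s ≫ (hC.ι (us s) (x.X s)).inv := by
    intro g s
    rw [Iso.inv_comp_eq, ← Category.assoc, cnd_fwd g s, Category.assoc, Iso.hom_inv_id,
      Category.comp_id]
  refine ⟨⟨y, hy⟩, ⟨?_⟩⟩
  exact {
    hom := ⟨fun s => (hC.ι (us s) (x.X s)).inv, fun g s => cnd_bwd g s⟩
    inv := ⟨fun s => (hC.ι (us s) (x.X s)).hom, fun g s => cnd_fwd g s⟩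
    hom_inv_id := Subtype.ext (funext fun s => (hC.ι (us s) (x.X s)).inv_hom_id)
    inv_hom_id := Subtype.ext (funext fun s => (hC.ι (us s) (x.X s)).hom_inv_id) }
end
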